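/- If a random variable Z over {0,1}^n has a δ-dense ε-model with respect to a test class F (i.e., Z is ε-indistinguishable by F from some distribution M that is δ-dense in the uniform distribution), then Z is δ-dense in some distribution that is ε-pseudorandom for F (i.e., there exists a distribution X that is ε-indistinguishable from uniform by F such that the mixture X = δ·Z + (1-δ)·W for some distribution W). -/

import Mathlib

open Finset

noncomputable section

/-- Real value of a boolean. -/
def bval (b : Bool) : ℝ := if b then 1 else 0

/-- Expectation of a boolean test under a (finitely supported) distribution on `{0,1}^n`. -/
def Ex {n : ℕ} (μ : (Fin n → Bool) → ℝ) (f : (Fin n → Bool) → Bool) : ℝ :=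
  ∑ z : Fin n → Bool, μ z * bval (f z)

/-- `μ` is a probability distribution on `{0,1}^n`. -/
def IsDist {n : ℕ} (μ : (Fin n → Bool) → ℝ) : Prop :=
  (∀ z, 0 ≤ μ z) ∧ ∑ z : Fin n → Bool, μ z = 1

/-- The uniform distribution on `{0,1}^n`. -/
def uni (n : ℕ) : (Fin n → Bool) → ℝ := fun _ => 1 / 2 ^ n

/-- The biased-coin product distribution `N_α`: each bit is 1 with probability `1/2 - α`. -/
def coin (n : ℕ) (α : ℝ) : (Fin n → Bool) → ℝ :=
  fun z => ∏ i : Fin n, if z i then (1/2 - α : ℝ) else (1/2 + α)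

/-- Hamming weight. -/
def wt {m : ℕ} (z : Fin m → Bool) : ℕ := (Finset.univ.filter fun i => z i = true).card

/-- Binary entropy function (base 2). -/
def hbin (x : ℝ) : ℝ := -(x * Real.logb 2 x + (1 - x) * Real.logb 2 (1 - x))

/-- `IsDT k f`: `f` is computed by a decision tree of depth at most `k`. -/
inductive IsDT {n : ℕ} : ℕ → ((Fin n → Bool) → Bool) → Prop
  | const (k : ℕ) (b : Bool) : IsDT k (fun _ => b)
  | node {k : ℕ} {g h : (Fin n → Bool) → Bool} (i : Fin n)
      (hg : IsDT k g) (hh : IsDT k h)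
      (hgi : ∀ z b, g (Function.update z i b) = g z)
      (hhi : ∀ z b, h (Function.update z i b) = h z) :
      IsDT (k + 1) (fun z => if z i then h z else g z)

/-- The random-restriction distribution `R_p`: each coordinate is unset (`none`)
with probability `p`, else a uniform bit. -/
def Rp (n : ℕ) (p : ℝ) : (Fin n → Option Bool) → ℝ :=
  fun ρ => ∏ i : Fin n, Option.elim (ρ i) p (fun _ => (1 - p) / 2)

/-- Composition of a restriction with an input: unset coordinates are filled from `z`. -/
def compR {n : ℕ} (ρ : Fin n → Option Bool) (z : Fin n → Bool) : Fin n → Bool :=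
  fun i => (ρ i).getD (z i)

/-- The hamSlice of `{0,1}^m` of Hamming weight exactly `w`. -/
def hamSlice (m w : ℕ) : Finset (Fin m → Bool) :=
  Finset.univ.filter fun z => wt z = w

/-- a `δ`-dense `ε`-model implies density in an `ε`-pseudorandom set. -/
theorem dense_model_implies_dense_in_pseudorandom {n : ℕ}
    (F : Set ((Fin n → Bool) → Bool))
    (μZ : (Fin n → Bool) → ℝ) (hZ : IsDist μZ)
    (ε δ : ℝ) (hδ0 : 0 < δ) (hδ1 : δ ≤ 1) (hε : 0 ≤ ε)
    (hmodel : ∃ μM : (Fin n → Bool) → ℝ, IsDist μM ∧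
      (∀ z, μM z ≤ (1 / δ) * (1 / 2 ^ n)) ∧
      ∀ f ∈ F, |Ex μZ f - Ex μM f| ≤ ε) :
    ∃ μX μW : (Fin n → Bool) → ℝ, IsDist μX ∧ IsDist μW ∧
      (∀ f ∈ F, |Ex μX f - Ex (uni n) f| ≤ ε) ∧
      (∀ z, μX z = δ * μZ z + (1 - δ) * μW z) := by
  obtain ⟨μM, hM, hMd, hMF⟩ := hmodel
  have huni_sum : ∑ z : Fin n → Bool, uni n z = 1 := by
    simp [uni, Finset.sum_const, Finset.card_univ]
  have hdm : ∀ z, δ * μM z ≤ uni n z := by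
    intro z
    have := mul_le_mul_of_nonneg_left (hMd z) hδ0.le
    calc δ * μM z ≤ δ * ((1 / δ) * (1 / 2 ^ n)) := this
      _ = uni n z := by simp only [uni]; rw [← mul_assoc, mul_one_div_cancel hδ0.ne', one_mul]
  set μX : (Fin n → Bool) → ℝ := fun z => δ * μZ z + (uni n z - δ * μM z) with hXdef
  have hXdist : IsDist μX := by
    constructor
    · intro z
      have h1 : 0 ≤ δ * μZ z := mul_nonneg hδ0.le (hZ.1 z)
      have h2 : 0 ≤ uni n z - δ * μM z := sub_nonneg.mpr (hdm z)
      simpa [hXdef] using add_nonneg h1 h2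
    · simp only [hXdef]
      rw [Finset.sum_add_distrib, Finset.sum_sub_distrib, ← Finset.mul_sum, ← Finset.mul_sum,
        hZ.2, hM.2, huni_sum]
      ring
  have hXEx : ∀ f, Ex μX f = δ * Ex μZ f + Ex (uni n) f - δ * Ex μM f := by
    intro f
    simp only [Ex, hXdef, Finset.mul_sum]
    rw [← Finset.sum_add_distrib, ← Finset.sum_sub_distrib]
    congr 1; ext z; ring
  have hXF : ∀ f ∈ F, |Ex μX f - Ex (uni n) f| ≤ ε := by
    intro f hf
    have : Ex μX f - Ex (uni n) f = δ * (Ex μZ f - Ex μM f) := by rw [hXEx f]; ring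
    rw [this, abs_mul, abs_of_pos hδ0]
    calc δ * |Ex μZ f - Ex μM f| ≤ δ * ε := mul_le_mul_of_nonneg_left (hMF f hf) hδ0.le
      _ ≤ 1 * ε := mul_le_mul_of_nonneg_right hδ1 hε
      _ = ε := one_mul ε
  by_cases hδeq : δ = 1
  · -- μM = uni
    have hMeq : ∀ z, μM z = uni n z := by
      have hnn : ∀ z ∈ (Finset.univ : Finset (Fin n → Bool)), 0 ≤ uni n z - μM z := by
        intro z _
        have := hdm z; rw [hδeq, one_mul] at this; linarith
      have hsum : ∑ z : Fin n → Bool, (uni n z - μM z) = 0 := by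
        rw [Finset.sum_sub_distrib, huni_sum, hM.2]; ring
      intro z
      have := (Finset.sum_eq_zero_iff_of_nonneg hnn).mp hsum z (Finset.mem_univ z)
      linarith
    refine ⟨μX, uni n, hXdist, ⟨fun z => by unfold uni; positivity, huni_sum⟩, hXF, ?_⟩
    intro z
    simp [hXdef, hδeq, hMeq z]
  · have hδlt : δ < 1 := lt_of_le_of_ne hδ1 hδeq
    have h1δ : (0:ℝ) < 1 - δ := by linarith
    set μW : (Fin n → Bool) → ℝ := fun z => (uni n z - δ * μM z) / (1 - δ) with hWdef
    refine ⟨μX, μW, hXdist, ⟨?_, ?_⟩, hXF, ?_⟩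
    · intro z
      exact div_nonneg (sub_nonneg.mpr (hdm z)) h1δ.le
    · simp only [hWdef]
      rw [← Finset.sum_div, Finset.sum_sub_distrib, ← Finset.mul_sum, huni_sum, hM.2]
      field_simp
    · intro z
      simp only [hXdef, hWdef]
      field_simp
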